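/- In the setting of the previous statement, D(A) = Z(I − P)H is dense in H: if x ⟂ Z(I−P)H then Z*x ∈ PH = U, but Z*x ∈ D(R), so by U ∩ D(R) = {0} we get Z*x = 0 and hence x = 0. -/

import Mathlib

variable {H : Type*} [NormedAddCommGroup H] [InnerProductSpace ℂ H] [CompleteSpace H]

open ContinuousLinearMap in
lemma norm_adjoint_apply_eq_of_normal (Z : H →L[ℂ] H) (hZn : IsStarNormal Z) (x : H) :
    ‖ContinuousLinearMap.adjoint Z x‖ = ‖Z x‖ := by
  have hcomm : Z ∘L adjoint Z = adjoint Z ∘L Z := by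
    have := hZn.star_comm_self
    rw [Commute, SemiconjBy, star_eq_adjoint] at this
    ext v
    have := congrArg (fun A => A v) this
    simpa [mul_apply] using this.symm
  have h1 : inner ℂ (adjoint Z x) (adjoint Z x) = inner ℂ (Z x) (Z x) := by
    rw [adjoint_inner_left, ← comp_apply Z (adjoint Z), hcomm, comp_apply,
      adjoint_inner_right]
  rw [inner_self_eq_norm_sq_to_K, inner_self_eq_norm_sq_to_K] at h1
  have h2 : ‖adjoint Z x‖ ^ 2 = ‖Z x‖ ^ 2 := by exact_mod_cast h1
  nlinarith [norm_nonneg (adjoint Z x), norm_nonneg (Z x)]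

open ContinuousLinearMap in
lemma range_adjoint_le_range_of_normal (Z : H →L[ℂ] H) (hZn : IsStarNormal Z)
    (hZinj : Function.Injective Z) :
    LinearMap.range ((adjoint Z : H →L[ℂ] H) : H →ₗ[ℂ] H) ≤
      LinearMap.range ((Z : H →L[ℂ] H) : H →ₗ[ℂ] H) := by
  have hnorm : ∀ x, ‖adjoint Z x‖ = ‖Z x‖ := norm_adjoint_apply_eq_of_normal Z hZn
  have hAinj : Function.Injective (adjoint Z) := by
    intro a b hab
    apply hZinj
    have : adjoint Z (a - b) = 0 := by simp [hab]
    have h0 : ‖Z (a - b)‖ = 0 := by rw [← hnorm, this, norm_zero]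
    have : Z (a - b) = 0 := by rwa [norm_eq_zero] at h0
    rw [map_sub, sub_eq_zero] at this
    exact this
  set D : Submodule ℂ H := LinearMap.range ((adjoint Z : H →L[ℂ] H) : H →ₗ[ℂ] H) with hD
  -- D is dense since Z is injective
  have hdense : Dense (D : Set H) := by
    rw [Submodule.dense_iff_topologicalClosure_eq_top, Submodule.topologicalClosure_eq_top_iff]
    rw [Submodule.eq_bot_iff]
    intro x hx
    have hZx : Z x = 0 := by
      have : ∀ y : H, inner ℂ y (Z x) = 0 := by
        intro y
        have := hx (adjoint Z y) ⟨y, rfl⟩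
        rwa [adjoint_inner_left] at this
      have := this (Z x)
      rwa [inner_self_eq_zero] at this
    have : Z x = Z 0 := by simpa using hZx
    exact hZinj this
  -- equivalence H ≃ₗ D
  let equiv : H ≃ₗ[ℂ] D := LinearEquiv.ofInjective
    ((adjoint Z : H →L[ℂ] H) : H →ₗ[ℂ] H) hAinj
  have hequiv : ∀ y : D, adjoint Z (equiv.symm y) = (y : H) :=
    fun y => LinearEquiv.ofInjective_symm_apply
      (f := ((adjoint Z : H →L[ℂ] H) : H →ₗ[ℂ] H)) (h := hAinj) y
  -- the map V₀ : D → H, adjoint Z x ↦ Z x, is a bounded linear map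
  let f₀ : D →ₗ[ℂ] H := (Z : H →ₗ[ℂ] H).comp (equiv.symm : D →ₗ[ℂ] H)
  have hf₀ : ∀ y : D, ‖f₀ y‖ = ‖(y : H)‖ := by
    intro y
    show ‖Z (equiv.symm y)‖ = ‖(y : H)‖
    rw [← hnorm, hequiv]
  let f : D →L[ℂ] H := f₀.mkContinuous 1 (by
    intro y
    rw [hf₀, one_mul]
    rfl)
  have hf : ∀ y : D, f y = Z (equiv.symm y) := fun y => rfl
  -- extend to all of H
  have h_e : IsUniformInducing (D.subtypeL : D →L[ℂ] H) :=
    isometry_subtype_coe.isUniformInducing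
  have h_dense : DenseRange (D.subtypeL : D →L[ℂ] H) := by
    simpa [DenseRange, Subtype.range_coe_subtype] using hdense
  let V : H →L[ℂ] H := f.extend D.subtypeL
  have hV : ∀ x : H, V (adjoint Z x) = Z x := by
    intro x
    have h1 : adjoint Z x = D.subtypeL (equiv x) := rfl
    rw [h1, f.extend_eq h_dense h_e, hf, LinearEquiv.symm_apply_apply]
  -- V ∘ adjoint Z = Z, hence adjoint Z = Z ∘ adjoint V
  have hVZ : V ∘L adjoint Z = Z := by ext x; exact hV x
  have key : adjoint Z = Z ∘L adjoint V := by
    have := congrArg ContinuousLinearMap.adjoint hVZ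
    rw [adjoint_comp, adjoint_adjoint] at this
    exact this.symm
  rintro y ⟨x, rfl⟩
  exact ⟨adjoint V x, by show Z (adjoint V x) = adjoint Z x; rw [key]; rfl⟩

/-- Let `Z` be a bounded injective normal operator on `H` (so `Z*` is also
injective and `range Z* = range Z = D(R)` for `R = Z⁻¹`), and let `𝒰` be a closed
subspace with `𝒰 ∩ range Z = {0}`, with orthogonal projection `P` onto `𝒰`. Then
`Z(I − P)H` is dense in `H`. -/
theorem range_Z_one_sub_P_dense (Z : H →L[ℂ] H) (hZn : IsStarNormal Z)
    (hZinj : Function.Injective Z)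
    (𝒰 : Submodule ℂ H) [CompleteSpace ↥𝒰] (h𝒰closed : IsClosed (𝒰 : Set H))
    (h𝒰 : 𝒰 ⊓ LinearMap.range (Z : H →ₗ[ℂ] H) = ⊥) :
    Dense ((LinearMap.range
      ((Z.comp (ContinuousLinearMap.id ℂ H -
        𝒰.subtypeL.comp 𝒰.orthogonalProjectionOnto) : H →L[ℂ] H) : H →ₗ[ℂ] H) : Set H)) := by
  open ContinuousLinearMap in
  rw [Submodule.dense_iff_topologicalClosure_eq_top, Submodule.topologicalClosure_eq_top_iff,
    Submodule.eq_bot_iff]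
  intro x hx
  set S : H →L[ℂ] H := 𝒰.subtypeL.comp 𝒰.orthogonalProjectionOnto with hS
  set T : H →L[ℂ] H := Z.comp (ContinuousLinearMap.id ℂ H - S) with hT
  have hSsa : IsSelfAdjoint S := isSelfAdjoint_starProjection 𝒰
  have hQsa : IsSelfAdjoint (ContinuousLinearMap.id ℂ H - S) := by
    have h1 : IsSelfAdjoint (1 : H →L[ℂ] H) := IsSelfAdjoint.one _
    have := h1.sub hSsa
    simpa [ContinuousLinearMap.one_def] using this
  -- adjoint T x = 0
  have hadj : ContinuousLinearMap.adjoint T x = 0 := by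
    have h0 : ∀ y : H, inner ℂ y (ContinuousLinearMap.adjoint T x) = 0 := by
      intro y
      rw [ContinuousLinearMap.adjoint_inner_right]
      exact hx (T y) ⟨y, rfl⟩
    have := h0 (ContinuousLinearMap.adjoint T x)
    rwa [inner_self_eq_zero] at this
  have hTadj : ContinuousLinearMap.adjoint T =
      (ContinuousLinearMap.id ℂ H - S) ∘L ContinuousLinearMap.adjoint Z := by
    rw [hT, ContinuousLinearMap.adjoint_comp, hQsa.adjoint_eq]
  -- so (1 - S)(Z* x) = 0, i.e. Z* x = S (Z* x) ∈ 𝒰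
  have h1 : (ContinuousLinearMap.id ℂ H - S) (ContinuousLinearMap.adjoint Z x) = 0 := by
    rw [← ContinuousLinearMap.comp_apply, ← hTadj, hadj]
  have h2 : ContinuousLinearMap.adjoint Z x = S (ContinuousLinearMap.adjoint Z x) := by
    have := h1
    rw [ContinuousLinearMap.sub_apply] at this
    simpa [sub_eq_zero] using this
  have hmemU : ContinuousLinearMap.adjoint Z x ∈ 𝒰 := by
    rw [h2]
    exact (𝒰.orthogonalProjectionOnto (ContinuousLinearMap.adjoint Z x)).2
  have hmemR : ContinuousLinearMap.adjoint Z x ∈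
      LinearMap.range ((Z : H →L[ℂ] H) : H →ₗ[ℂ] H) :=
    range_adjoint_le_range_of_normal Z hZn hZinj ⟨x, rfl⟩
  have hZx : ContinuousLinearMap.adjoint Z x = 0 := by
    have : ContinuousLinearMap.adjoint Z x ∈
        𝒰 ⊓ LinearMap.range ((Z : H →L[ℂ] H) : H →ₗ[ℂ] H) := ⟨hmemU, hmemR⟩
    rw [h𝒰] at this
    exact this
  -- Z* injective since Z injective and Z normal
  have hnorm := norm_adjoint_apply_eq_of_normal Z hZn x
  rw [hZx, norm_zero] at hnorm
  have : Z x = 0 := by rw [← norm_eq_zero]; exact hnorm.symm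
  exact hZinj (by simpa using this)
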